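/- For all tuples x ∈ ℝ^a and y ∈ ℝ^b, P''(x ⧺ y) = P''(x) · P(y) + P'(x) · P'(y) + P(x) · P''(y), where x ⧺ y ∈ ℝ^{a+b} denotes the concatenation of the two tuples. -/

import Mathlib

noncomputable def td (u : ℝ) : ℝ := if u = 0 then 1 else u / (Real.exp u - 1)

/-- `p`-th elementary symmetric polynomial of a tuple of reals. -/
noncomputable def esymm {n : ℕ} (x : Fin n → ℝ) (p : ℕ) : ℝ :=
  ∑ t ∈ Finset.univ.powersetCard p, ∏ i ∈ t, x i

/-- `P(x) = (∏ td(x_i)) · Σ_p (−1)^p e_p(exp x)`. -/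
noncomputable def Pcl {n : ℕ} (x : Fin n → ℝ) : ℝ :=
  (∏ i, td (x i)) *
    ∑ p ∈ Finset.range (n + 1), (-1 : ℝ) ^ p * esymm (fun i => Real.exp (x i)) p

/-- `P'(x) = (∏ td(x_i)) · Σ_p (−1)^p p e_p(exp x)`. -/
noncomputable def Pcl' {n : ℕ} (x : Fin n → ℝ) : ℝ :=
  (∏ i, td (x i)) *
    ∑ p ∈ Finset.range (n + 1), (-1 : ℝ) ^ p * (p : ℝ) * esymm (fun i => Real.exp (x i)) p

/-- `P''(x) = (∏ td(x_i)) · Σ_p (−1)^p (p(p−1)/2) e_p(exp x)`. -/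
noncomputable def Pcl'' {n : ℕ} (x : Fin n → ℝ) : ℝ :=
  (∏ i, td (x i)) *
    ∑ p ∈ Finset.range (n + 1),
      (-1 : ℝ) ^ p * ((p : ℝ) * ((p : ℝ) - 1) / 2) * esymm (fun i => Real.exp (x i)) p

open Polynomial Finset

/-- The generating polynomial `∏ i, (1 - exp(z i) · X)`. -/
noncomputable def Qpoly {n : ℕ} (z : Fin n → ℝ) : Polynomial ℝ :=
  ∏ i, (1 - Polynomial.C (Real.exp (z i)) * Polynomial.X)

lemma Qpoly_eq {n : ℕ} (z : Fin n → ℝ) :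
    Qpoly z = ∑ p ∈ Finset.range (n + 1),
      Polynomial.C ((-1 : ℝ) ^ p * esymm (fun i => Real.exp (z i)) p) * Polynomial.X ^ p := by
  set e : Fin n → ℝ := fun i => Real.exp (z i) with he
  have h1 : Qpoly z = ∏ i : Fin n, (Polynomial.C (-e i) * Polynomial.X + 1) := by
    unfold Qpoly
    refine Finset.prod_congr rfl fun i _ => ?_
    rw [map_neg]; ring
  rw [h1, Finset.prod_add, Finset.sum_powerset]
  simp only [Finset.card_univ, Fintype.card_fin]
  refine Finset.sum_congr rfl fun p hp => ?_
  have key : ∀ t ∈ (Finset.univ : Finset (Fin n)).powersetCard p,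
      (∏ i ∈ t, Polynomial.C (-e i) * Polynomial.X) * (∏ i ∈ Finset.univ \ t, (1 : Polynomial ℝ))
        = Polynomial.C ((-1 : ℝ) ^ p * ∏ i ∈ t, e i) * Polynomial.X ^ p := by
    intro t ht
    have hc : t.card = p := (Finset.mem_powersetCard.mp ht).2
    rw [Finset.prod_const_one, mul_one, Finset.prod_mul_distrib, Finset.prod_const, hc,
      ← map_prod]
    congr 1
    rw [Finset.prod_congr rfl (fun x _ => (neg_one_mul (e x)).symm : ∀ x ∈ t, -e x = -1 * e x),
      Finset.prod_mul_distrib, Finset.prod_const, hc]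
  rw [Finset.sum_congr rfl key, ← Finset.sum_mul, ← map_sum]
  congr 2
  rw [esymm, Finset.mul_sum]

lemma Qpoly_append {a b : ℕ} (x : Fin a → ℝ) (y : Fin b → ℝ) :
    Qpoly (Fin.append x y) = Qpoly x * Qpoly y := by
  unfold Qpoly
  rw [Fin.prod_univ_add]
  simp [Fin.append_left, Fin.append_right]

lemma Pcl_eq {n : ℕ} (z : Fin n → ℝ) :
    Pcl z = (∏ i, td (z i)) * (Qpoly z).eval 1 := by
  rw [Qpoly_eq, Pcl]
  simp [Polynomial.eval_finset_sum]

lemma Pcl'_eq {n : ℕ} (z : Fin n → ℝ) :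
    Pcl' z = (∏ i, td (z i)) * ((Polynomial.derivative (Qpoly z)).eval 1) := by
  rw [Qpoly_eq, Pcl']
  simp only [map_sum, Polynomial.derivative_C_mul, Polynomial.derivative_X_pow,
    Polynomial.eval_finset_sum, Polynomial.eval_mul, Polynomial.eval_C, Polynomial.eval_pow,
    Polynomial.eval_X, one_pow, mul_one]
  congr 1
  refine Finset.sum_congr rfl fun p _ => ?_
  ring

lemma Pcl''_eq {n : ℕ} (z : Fin n → ℝ) :
    Pcl'' z = (∏ i, td (z i)) *
      ((Polynomial.derivative (Polynomial.derivative (Qpoly z))).eval 1 / 2) := by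
  rw [Qpoly_eq, Pcl'']
  simp only [map_sum, Polynomial.derivative_C_mul, Polynomial.derivative_X_pow,
    Polynomial.eval_finset_sum, Polynomial.eval_mul, Polynomial.eval_C, Polynomial.eval_pow,
    Polynomial.eval_X, one_pow, mul_one, Finset.sum_div]
  congr 1
  refine Finset.sum_congr rfl fun p _ => ?_
  rcases p with _ | p
  · simp
  · push_cast
    ring

lemma td_append {a b : ℕ} (x : Fin a → ℝ) (y : Fin b → ℝ) :
    (∏ i, td (Fin.append x y i)) = (∏ i, td (x i)) * ∏ i, td (y i) := by
  rw [Fin.prod_univ_add]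
  simp [Fin.append_left, Fin.append_right]

/-- second Leibniz rule
`P''(x ⧺ y) = P''(x)·P(y) + P'(x)·P'(y) + P(x)·P''(y)`. -/
theorem Pcl''_append (a b : ℕ) (x : Fin a → ℝ) (y : Fin b → ℝ) :
    Pcl'' (Fin.append x y) =
      Pcl'' x * Pcl y + Pcl' x * Pcl' y + Pcl x * Pcl'' y := by
  rw [Pcl''_eq, Pcl''_eq, Pcl''_eq, Pcl'_eq, Pcl'_eq, Pcl_eq, Pcl_eq, td_append,
    Qpoly_append, Polynomial.derivative_mul, map_add, Polynomial.derivative_mul,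
    Polynomial.derivative_mul]
  simp only [Polynomial.eval_add, Polynomial.eval_mul]
  ring
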